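/- If Z is an invertible real n×n matrix with singular value decomposition Z = UΣVᵀ (U, V orthogonal, Σ diagonal with positive entries), then Ẑ = UVᵀ is orthogonal and satisfies ‖Z − Ẑ‖_F ≤ ‖Z − Q‖_F for every orthogonal n×n matrix Q. -/
import Mathlib


open Matrix

/-- Frobenius norm of a square real matrix. -/
noncomputable def frobNorm {n : ℕ} (M : Matrix (Fin n) (Fin n) ℝ) : ℝ :=
  Real.sqrt (∑ i, ∑ j, (M i j) ^ 2)

lemma frobNorm_eq_trace {n : ℕ} (M : Matrix (Fin n) (Fin n) ℝ) :
    frobNorm M = Real.sqrt (Mᵀ * M).trace := by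
  unfold frobNorm
  congr 1
  rw [Finset.sum_comm]
  simp [Matrix.trace, Matrix.diag, Matrix.mul_apply, sq]

/-- Orthogonal Procrustes: if `Z = UΣVᵀ` is an SVD of an invertible matrix
(`U`, `V` orthogonal, `Σ` diagonal with positive entries), then `UVᵀ` is
orthogonal and is the Frobenius-nearest orthogonal matrix to `Z`. -/
theorem procrustes_svd_solution {n : ℕ} (U V : Matrix (Fin n) (Fin n) ℝ)
    (σ : Fin n → ℝ)
    (hU : Uᵀ * U = 1) (hU' : U * Uᵀ = 1)
    (hV : Vᵀ * V = 1) (hV' : V * Vᵀ = 1)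
    (hσ : ∀ i, 0 < σ i) :
    ((U * Vᵀ)ᵀ * (U * Vᵀ) = 1) ∧
      ∀ Q : Matrix (Fin n) (Fin n) ℝ, Qᵀ * Q = 1 →
        frobNorm (U * Matrix.diagonal σ * Vᵀ - U * Vᵀ) ≤
          frobNorm (U * Matrix.diagonal σ * Vᵀ - Q) := by
  set Z := U * Matrix.diagonal σ * Vᵀ with hZ
  have h1 : (U * Vᵀ)ᵀ * (U * Vᵀ) = 1 := by
    rw [Matrix.transpose_mul, Matrix.transpose_transpose]
    calc V * Uᵀ * (U * Vᵀ) = V * (Uᵀ * U * Vᵀ) := by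
          simp only [Matrix.mul_assoc]
      _ = 1 := by rw [hU, Matrix.one_mul, hV']
  -- expansion of the squared Frobenius norm
  have expand : ∀ Q : Matrix (Fin n) (Fin n) ℝ, Qᵀ * Q = 1 →
      ((Z - Q)ᵀ * (Z - Q)).trace
        = (Zᵀ * Z).trace + (n : ℝ) - 2 * (Qᵀ * Z).trace := by
    intro Q hQ
    have e : (Z - Q)ᵀ * (Z - Q) = Zᵀ * Z - Zᵀ * Q - Qᵀ * Z + Qᵀ * Q := by
      rw [Matrix.transpose_sub]
      noncomm_ring
    have ht : (Zᵀ * Q).trace = (Qᵀ * Z).trace := by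
      rw [← Matrix.trace_transpose (Zᵀ * Q), Matrix.transpose_mul,
        Matrix.transpose_transpose]
    rw [e, Matrix.trace_add, Matrix.trace_sub, Matrix.trace_sub, hQ,
      Matrix.trace_one, ht]
    simp [Fintype.card_fin]
    ring
  refine ⟨h1, fun Q hQ => ?_⟩
  -- the best value of the trace
  have hUV : (((U * Vᵀ)ᵀ) * Z).trace = ∑ i, σ i := by
    have : ((U * Vᵀ)ᵀ) * Z = V * Matrix.diagonal σ * Vᵀ := by
      rw [hZ, Matrix.transpose_mul, Matrix.transpose_transpose]
      calc V * Uᵀ * (U * Matrix.diagonal σ * Vᵀ)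
          = V * ((Uᵀ * U) * Matrix.diagonal σ) * Vᵀ := by
            simp only [Matrix.mul_assoc]
        _ = V * Matrix.diagonal σ * Vᵀ := by rw [hU, Matrix.one_mul]
    rw [this, Matrix.trace_mul_comm, ← Matrix.mul_assoc, hV, Matrix.one_mul,
      Matrix.trace_diagonal]
  -- the trace for a general orthogonal Q
  set W : Matrix (Fin n) (Fin n) ℝ := Vᵀ * Qᵀ * U with hW
  have hWW : W * Wᵀ = 1 := by
    rw [hW, Matrix.transpose_mul, Matrix.transpose_mul,
      Matrix.transpose_transpose, Matrix.transpose_transpose]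
    calc Vᵀ * Qᵀ * U * (Uᵀ * (Q * V))
        = Vᵀ * (Qᵀ * ((U * Uᵀ) * (Q * V))) := by simp only [Matrix.mul_assoc]
      _ = Vᵀ * ((Qᵀ * Q) * V) := by
          rw [hU', Matrix.one_mul]; simp only [Matrix.mul_assoc]
      _ = 1 := by rw [hQ, Matrix.one_mul, hV]
  have hWii : ∀ i, W i i ≤ 1 := by
    intro i
    have hrow : ∑ k, W i k * W i k = 1 := by
      have := congrFun (congrFun hWW i) i
      simpa [Matrix.mul_apply, Matrix.one_apply] using this
    have h2 : W i i * W i i ≤ 1 := by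
      rw [← hrow]
      exact Finset.single_le_sum (f := fun k => W i k * W i k)
        (fun k _ => mul_self_nonneg _) (Finset.mem_univ i)
    nlinarith
  have hQZ : (Qᵀ * Z).trace = ∑ i, W i i * σ i := by
    have e : Qᵀ * Z = (Qᵀ * U * Matrix.diagonal σ) * Vᵀ := by
      rw [hZ]; simp only [Matrix.mul_assoc]
    rw [e, Matrix.trace_mul_comm]
    have e2 : Vᵀ * (Qᵀ * U * Matrix.diagonal σ) = W * Matrix.diagonal σ := by
      rw [hW]; simp only [Matrix.mul_assoc]
    rw [e2]
    simp [Matrix.trace, Matrix.diag, Matrix.mul_diagonal]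
  have hmax : (Qᵀ * Z).trace ≤ ∑ i, σ i := by
    rw [hQZ]
    apply Finset.sum_le_sum
    intro i _
    have := mul_le_mul_of_nonneg_right (hWii i) (le_of_lt (hσ i))
    simpa using this
  rw [frobNorm_eq_trace, frobNorm_eq_trace]
  apply Real.sqrt_le_sqrt
  rw [expand _ h1, expand Q hQ, hUV]
  linarith
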